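/- The basic form associated to a closed conditional expression is unique: if t1 and t2 are basic forms and CP proves t1 = t2, then t1 and t2 are syntactically identical (for any set of atoms A, using the free-valuation semantics to distinguish basic forms). -/

import Mathlib

inductive CE (A : Type) : Type
  | tt : CE A
  | ff : CE A
  | atom : A → CE A
  | cond : CE A → CE A → CE A → CE A

inductive Deriv {A : Type} (Ax : CE A → CE A → Prop) : CE A → CE A → Prop
  | ax {t t'} : Ax t t' → Deriv Ax t t'
  | refl (t) : Deriv Ax t t
  | symm {t t'} : Deriv Ax t t' → Deriv Ax t' t
  | trans {t t' t''} : Deriv Ax t t' → Deriv Ax t' t'' → Deriv Ax t t''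
  | congr {x x' y y' z z'} : Deriv Ax x x' → Deriv Ax y y' → Deriv Ax z z' →
      Deriv Ax (.cond x y z) (.cond x' y' z')
  | cp1 (x y) : Deriv Ax (.cond x .tt y) x
  | cp2 (x y) : Deriv Ax (.cond x .ff y) y
  | cp3 (x) : Deriv Ax (.cond .tt x .ff) x
  | cp4 (x y z u v) : Deriv Ax (.cond x (.cond y z u) v) (.cond (.cond x y v) z (.cond x u v))

/-- Derivability from the CP axioms alone (no extra axioms). -/
def CP {A : Type} : CE A → CE A → Prop := Deriv (fun _ _ => False)

/-- Basic forms: T, F, and t1 ◁ a ▷ t2 with a an atom and t1, t2 basic forms. -/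
inductive BasicForm {A : Type} : CE A → Prop
  | tt : BasicForm .tt
  | ff : BasicForm .ff
  | cond {t1 t2 : CE A} (a : A) : BasicForm t1 → BasicForm t2 →
      BasicForm (.cond t1 (.atom a) t2)

namespace BFU

variable {A : Type}

/-- States: a function from nonempty strings of atoms (head atom + rest) to booleans. -/
def St (A : Type) := A → List A → Bool

def shift (a : A) (f : St A) : St A := fun b σ => f a (b :: σ)

mutual
def ev : CE A → St A → Bool
  | .tt, _ => true
  | .ff, _ => false
  | .atom a, f => f a []
  | .cond x y z, f => if ev y f then ev x (dv y f) else ev z (dv y f)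
def dv : CE A → St A → St A
  | .tt, f => f
  | .ff, f => f
  | .atom a, f => shift a f
  | .cond x y z, f => if ev y f then dv x (dv y f) else dv z (dv y f)
end

def wapp : List A → St A → St A
  | [], f => f
  | a :: w, f => fun b σ => f a (w ++ b :: σ)

theorem wapp_shift (a : A) (w : List A) (f : St A) :
    wapp w (shift a f) = wapp (a :: w) f := by
  cases w with
  | nil => rfl
  | cons c w => funext b σ; rfl

theorem sound {Ax : CE A → CE A → Prop}
    (hAx : ∀ t t', Ax t t' → ∀ f, ev t f = ev t' f ∧ dv t f = dv t' f)
    {t t' : CE A} (h : Deriv Ax t t') : ∀ f, ev t f = ev t' f ∧ dv t f = dv t' f := by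
  induction h with
  | ax h => exact hAx _ _ h
  | refl t => exact fun f => ⟨rfl, rfl⟩
  | symm _ ih => exact fun f => ⟨(ih f).1.symm, (ih f).2.symm⟩
  | trans _ _ ih1 ih2 => exact fun f => ⟨(ih1 f).1.trans (ih2 f).1, (ih1 f).2.trans (ih2 f).2⟩
  | @congr x x' y y' z z' _ _ _ ihx ihy ihz =>
      intro f
      simp only [ev, dv, (ihy f).1, (ihy f).2]
      exact ⟨by rw [(ihx _).1, (ihz _).1], by rw [(ihx _).2, (ihz _).2]⟩
  | cp1 x y => exact fun f => ⟨by simp [ev, dv], by simp [ev, dv]⟩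
  | cp2 x y => exact fun f => ⟨by simp [ev, dv], by simp [ev, dv]⟩
  | cp3 x =>
      intro f
      refine ⟨?_, ?_⟩ <;> · simp only [ev, dv]; cases hx : ev x f <;> simp
  | cp4 x y z u v =>
      intro f
      refine ⟨?_, ?_⟩ <;> · simp only [ev, dv]; by_cases hz : ev z f = true <;> simp [hz]

theorem dv_word {t : CE A} (h : BasicForm t) : ∀ f : St A, ∃ w, dv t f = wapp w f := by
  induction h with
  | tt => exact fun f => ⟨[], rfl⟩
  | ff => exact fun f => ⟨[], rfl⟩
  | @cond t1 t2 a h1 h2 ih1 ih2 =>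
      intro f
      cases hf : f a [] with
      | true =>
          obtain ⟨w, hw⟩ := ih1 (shift a f)
          exact ⟨a :: w, by simp only [dv, ev, hf, if_true, hw, wapp_shift]⟩
      | false =>
          obtain ⟨w, hw⟩ := ih2 (shift a f)
          exact ⟨a :: w, by simp only [dv, ev, hf, if_false, hw, wapp_shift,
            Bool.false_eq_true]⟩

/-- A basic conditional never acts as the identity on all states. -/
theorem cond_ne_id {u1 u2 : CE A} (a : A) (hb1 : BasicForm u1)
    (hc : ∀ f : St A, dv (CE.cond u1 (CE.atom a) u2) f = f) : False := by
  set f : St A := fun _ σ => σ.isEmpty with hfdef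
  have hfa : f a [] = true := rfl
  obtain ⟨w, hw⟩ := dv_word hb1 (shift a f)
  have hd := hc f
  have h2 : dv (CE.cond u1 (CE.atom a) u2) f a [] = f a [] := by rw [hd]
  simp only [dv, ev, hfa, if_true, hw, wapp_shift] at h2
  simp only [wapp, hfdef] at h2
  cases w <;> simp [hfdef] at h2

theorem bf_unique {t1 t2 : CE A} (h1 : BasicForm t1) (h2 : BasicForm t2)
    (h : ∀ f, ev t1 f = ev t2 f ∧ dv t1 f = dv t2 f) : t1 = t2 := by
  classical
  induction h1 generalizing t2 with
  | tt =>
      cases h2 with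
      | tt => rfl
      | ff => exact absurd (h (fun _ _ => true)).1 (by simp [ev])
      | @cond u1 u2 a hb1 hb2 =>
          exact absurd (fun f => ((h f).2).symm) (cond_ne_id a hb1)
  | ff =>
      cases h2 with
      | tt => exact absurd (h (fun _ _ => true)).1 (by simp [ev])
      | ff => rfl
      | @cond u1 u2 a hb1 hb2 =>
          exact absurd (fun f => ((h f).2).symm) (cond_ne_id a hb1)
  | @cond s1 s2 a hs1 hs2 ih1 ih2 =>
      cases h2 with
      | tt => exact absurd (fun f => (h f).2) (cond_ne_id a hs1)
      | ff => exact absurd (fun f => (h f).2) (cond_ne_id a hs1)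
      | @cond u1 u2 b hu1 hu2 =>
          have hab : a = b := by
            by_contra hab
            set f : St A := fun a' _ => if a' = a then true else false with hfdef
            have hfa : f a [] = true := by simp [hfdef]
            have hfb : f b [] = false := by
              rw [hfdef]; exact if_neg (fun hh => hab hh.symm)
            obtain ⟨w, hw⟩ := dv_word hs1 (shift a f)
            obtain ⟨w', hw'⟩ := dv_word hu2 (shift b f)
            have hd := (h f).2
            have heq : dv (CE.cond s1 (CE.atom a) s2) f a [] =
                dv (CE.cond u1 (CE.atom b) u2) f a [] := by rw [hd]
            simp only [dv, ev, hfa, hfb, if_true, if_false, Bool.false_eq_true,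
              hw, hw', wapp_shift] at heq
            simp only [wapp, hfdef, if_pos rfl] at heq
            rw [if_neg (fun hh => hab hh.symm)] at heq
            simp [hfdef, Ne.symm hab] at heq
          subst hab
          -- branch-selecting state
          have key : ∀ (e : Bool) (g : St A),
              (if e then ev s1 g else ev s2 g) = (if e then ev u1 g else ev u2 g) ∧
              (if e then dv s1 g else dv s2 g) = (if e then dv u1 g else dv u2 g) := by
            intro e g
            set f : St A := fun _ σ => match σ with
              | [] => e
              | b :: σ' => g b σ' with hfdef
            have hfa : f a [] = e := rfl
            have hsh : shift a f = g := by funext b σ; rfl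
            have hh := h f
            simp only [ev, dv, hfa, hsh] at hh
            exact hh
          have e1 : s1 = u1 := ih1 hu1 (fun g => by simpa using key true g)
          have e2 : s2 = u2 := ih2 hu2 (fun g => by simpa using key false g)
          rw [e1, e2]

end BFU

theorem basic_form_unique (A : Type) (t1 t2 : CE A)
    (h1 : BasicForm t1) (h2 : BasicForm t2) (h : CP t1 t2) : t1 = t2 := by
  exact BFU.bf_unique h1 h2 (BFU.sound (fun _ _ hf => hf.elim) h)
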